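/- Let n ≥ 2 and let Λ_1, Λ_2 be finite-index subgroups of Γ = ℤ^n ⋊ SL(n,ℤ), and let δ : Λ_1 → Λ_2 be a group isomorphism. Then δ(Λ_1 ∩ ℤ^n) = Λ_2 ∩ ℤ^n, where ℤ^n is identified with the translation normal subgroup of Γ. -/

import Mathlib

open Matrix

/-- The action of `SL(n,ℤ)` on `ℤⁿ` (written multiplicatively) by matrix-vector
multiplication. -/
noncomputable def slAct (n : ℕ) :
    SpecialLinearGroup (Fin n) ℤ →* MulAut (Multiplicative (Fin n → ℤ)) where
  toFun S :=
    { toFun := fun v => Multiplicative.ofAdd ((S : Matrix (Fin n) (Fin n) ℤ).mulVec v.toAdd)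
      invFun := fun v =>
        Multiplicative.ofAdd (((S⁻¹ : SpecialLinearGroup (Fin n) ℤ) :
          Matrix (Fin n) (Fin n) ℤ).mulVec v.toAdd)
      left_inv := fun v => by
        simp [Matrix.mulVec_mulVec, Matrix.adjugate_mul, Matrix.mul_adjugate, S.prop]
      right_inv := fun v => by
        simp [Matrix.mulVec_mulVec, Matrix.adjugate_mul, Matrix.mul_adjugate, S.prop]
      map_mul' := fun v w => by
        simp [Matrix.mulVec_add] }
  map_one' := by
    ext v
    simp
  map_mul' S T := by
    ext v
    simp [Matrix.mulVec_mulVec]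

/-- The group `Γ = ℤⁿ ⋊ SL(n,ℤ)`. -/
noncomputable abbrev GammaSL (n : ℕ) :=
  SemidirectProduct (Multiplicative (Fin n → ℤ)) (SpecialLinearGroup (Fin n) ℤ) (slAct n)

section Aux

lemma alg_id {m : ℕ} (e N : Matrix (Fin m) (Fin m) ℤ) (he : e * e = 0) (hn : N * N = 0)
    (h : (1+e) * (1+N) * (1-e) * (1+N) = (1+N) * ((1+e) * (1+N) * (1-e))) :
    2 • (N*e*N) + (e*N*e*N - N*e*N*e) = 0 := by
  have key : 2 • (N*e*N) + (e*N*e*N - N*e*N*e) =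
      -((1+e) * (1+N) * (1-e) * (1+N) - (1+N) * ((1+e) * (1+N) * (1-e)))
      + (e*(N*N) - (e*e)*N + N*(e*e) + (N*N)*e) := by noncomm_ring
  rw [key, h, he, hn]
  simp

lemma stepB {m : ℕ} (N E : Matrix (Fin m) (Fin m) ℤ) (hN : N*N = 0) (hE : E*E = 0)
    (k : ℤ) (hk : k ≠ 0)
    (h1 : (1+k•E)*(1+N)*(1-k•E)*(1+N) = (1+N)*((1+k•E)*(1+N)*(1-k•E)))
    (h2 : (1+(2*k)•E)*(1+N)*(1-(2*k)•E)*(1+N) = (1+N)*((1+(2*k)•E)*(1+N)*(1-(2*k)•E))) :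
    N*E*N = 0 := by
  have hsq : ∀ c : ℤ, (c•E)*(c•E) = 0 := fun c => by
    rw [smul_mul_assoc, mul_smul_comm, hE]; simp
  have e1 := alg_id (k•E) N (hsq k) hN h1
  have e2 := alg_id ((2*k)•E) N (hsq (2*k)) hN h2
  set X := N*E*N with hX
  set Y := E*N*E*N with hY
  set Z := N*E*N*E with hZ
  have norm1 : ∀ c : ℤ, 2 • (N*(c•E)*N) + ((c•E)*N*(c•E)*N - N*(c•E)*N*(c•E))
      = (2*c) • X + (c*c) • (Y - Z) := by
    intro c
    simp only [hX, hY, hZ, smul_mul_assoc, mul_smul_comm]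
    module
  rw [norm1] at e1 e2
  have hYZ : Y - Z = 0 := by
    have hlin : (2*(k*k)) • (Y - Z) =
        ((2*(2*k)) • X + (2*k*(2*k)) • (Y - Z)) - (2:ℤ) • ((2*k) • X + (k*k) • (Y - Z)) := by
      module
    rw [e1, e2] at hlin
    simp only [smul_zero, sub_zero] at hlin
    rcases smul_eq_zero.mp hlin with h | h
    · exact absurd h (by positivity)
    · exact h
  have hXz : (2*k) • X = 0 := by
    rw [hYZ, smul_zero, add_zero] at e1; exact e1
  rcases smul_eq_zero.mp hXz with h | h
  · omega
  · exact h

lemma entryNEN {m : ℕ} (N : Matrix (Fin m) (Fin m) ℤ) (i j a b : Fin m) :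
    (N * Matrix.single i j (1:ℤ) * N) a b = N a i * N j b := by
  rw [Matrix.mul_apply]
  simp [Matrix.mul_apply, Matrix.single, ite_and, Finset.sum_ite_eq, ite_mul,
    Finset.sum_ite_eq']

lemma comb {m : ℕ} (N : Matrix (Fin m) (Fin m) ℤ) (hN : N * N = 0)
    (hX : ∀ i j : Fin m, i ≠ j → ∀ a b : Fin m, N a i * N j b = 0) : N = 0 := by
  by_contra h
  obtain ⟨p, q, hpq⟩ : ∃ p q, N p q ≠ 0 := by
    by_contra hc
    push_neg at hc
    exact h (Matrix.ext fun p q => hc p q)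
  have hrow : ∀ j, j ≠ q → ∀ b, N j b = 0 := fun j hj b => by
    have := hX q j (fun hh => hj hh.symm) p b
    exact (mul_eq_zero.mp this).resolve_left hpq
  have hpq' : p = q := by
    by_contra hne
    exact hpq (hrow p hne q)
  subst hpq'
  have hcol : ∀ i, i ≠ p → ∀ a, N a i = 0 := fun i hi a => by
    have := hX i p hi a p
    exact (mul_eq_zero.mp this).resolve_right hpq
  have h2 : (N * N) p p = N p p * N p p := by
    rw [Matrix.mul_apply]
    rw [Finset.sum_eq_single p]
    · intro b _ hb
      rw [hcol b hb p, zero_mul]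
    · intro hb; exact absurd (Finset.mem_univ p) hb
  rw [hN, Matrix.zero_apply] at h2
  exact hpq (mul_self_eq_zero.mp h2.symm)

noncomputable def tv {m : ℕ} (i j : Fin m) (hij : i ≠ j) (c : ℤ) :
    SpecialLinearGroup (Fin m) ℤ :=
  ⟨Matrix.transvection i j c, Matrix.det_transvection_of_ne i j hij c⟩

lemma tv_one {m : ℕ} (i j : Fin m) (hij : i ≠ j) : tv i j hij 0 = 1 := by
  apply Subtype.ext; simp [tv]

lemma tv_mul {m : ℕ} (i j : Fin m) (hij : i ≠ j) (c d : ℤ) :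
    tv i j hij c * tv i j hij d = tv i j hij (c + d) := by
  apply Subtype.ext
  rw [Matrix.SpecialLinearGroup.coe_mul]
  exact Matrix.transvection_mul_transvection_same i j hij c d

lemma tv_inv {m : ℕ} (i j : Fin m) (hij : i ≠ j) (c : ℤ) :
    (tv i j hij c)⁻¹ = tv i j hij (-c) := by
  symm
  apply eq_inv_of_mul_eq_one_right
  rw [tv_mul, add_neg_cancel, tv_one]

lemma tv_pow {m : ℕ} (i j : Fin m) (hij : i ≠ j) (k : ℕ) :
    (tv i j hij 1) ^ k = tv i j hij k := by
  induction k with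
  | zero => rw [pow_zero, ← tv_one i j hij]; norm_num
  | succ k ih => rw [pow_succ, ih, tv_mul]; norm_num

lemma tv_coe {m : ℕ} (i j : Fin m) (hij : i ≠ j) (c : ℤ) :
    (tv i j hij c : Matrix (Fin m) (Fin m) ℤ) = 1 + c • Matrix.single i j (1:ℤ) := by
  rw [tv]
  show Matrix.transvection i j c = _
  rw [Matrix.transvection, Matrix.smul_single, smul_eq_mul, mul_one]

lemma slAct_apply {n : ℕ} (S : SpecialLinearGroup (Fin n) ℤ) (u : Multiplicative (Fin n → ℤ)) :
    (slAct n S) u = Multiplicative.ofAdd ((S : Matrix (Fin n) (Fin n) ℤ).mulVec u.toAdd) := rfl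

lemma stepA {n : ℕ} (g : GammaSL n) (a : Multiplicative (Fin n → ℤ))
    (h : Commute (SemidirectProduct.inl a * g * (SemidirectProduct.inl a)⁻¹) g) :
    (((g.right : Matrix (Fin n) (Fin n) ℤ) - 1) *
      ((g.right : Matrix (Fin n) (Fin n) ℤ) - 1)).mulVec a.toAdd = 0 := by
  have h' := congrArg SemidirectProduct.left h
  simp only [SemidirectProduct.mul_left, SemidirectProduct.mul_right,
    SemidirectProduct.inv_left, SemidirectProduct.inv_right,
    SemidirectProduct.left_inl, SemidirectProduct.right_inl,
    _root_.map_one, MulAut.one_apply, one_mul, mul_one, inv_one, slAct_apply] at h'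
  have h2 := congrArg Multiplicative.toAdd h'
  simp only [toAdd_mul, toAdd_ofAdd, toAdd_inv] at h2
  simp only [Matrix.mulVec_add, Matrix.mulVec_neg] at h2
  simp only [Matrix.sub_mulVec, Matrix.mulVec_sub, Matrix.one_mulVec, ← Matrix.mulVec_mulVec]
  linear_combination h2

/-- The key "hard direction": in a finite-index subgroup `Λ`, an element all of whose
`Λ`-conjugates commute with it must be a translation. -/
lemma key_lemma {n : ℕ} (Λ : Subgroup (GammaSL n)) (hΛ : Λ.index ≠ 0)
    (g : GammaSL n)
    (hP : ∀ x ∈ Λ, Commute (x * g * x⁻¹) g) :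
    g ∈ (SemidirectProduct.inl :
      Multiplicative (Fin n → ℤ) →* GammaSL n).range := by
  set B : Matrix (Fin n) (Fin n) ℤ := (g.right : Matrix (Fin n) (Fin n) ℤ) with hB
  set N : Matrix (Fin n) (Fin n) ℤ := B - 1 with hNdef
  -- Step A : N * N = 0
  have hN2 : N * N = 0 := by
    have hA : ∀ w : Fin n → ℤ, ∃ c : ℕ, 0 < c ∧ (N*N).mulVec ((c:ℤ) • w) = 0 := by
      intro w
      obtain ⟨c, hc, _, hmem⟩ := Subgroup.exists_pow_mem_of_index_ne_zero hΛ
        (SemidirectProduct.inl (Multiplicative.ofAdd w))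
      refine ⟨c, hc, ?_⟩
      rw [← map_pow] at hmem
      have hcomm := hP _ hmem
      have := stepA g (Multiplicative.ofAdd w ^ c) hcomm
      rw [← hB, ← hNdef] at this
      have hsm : Multiplicative.toAdd (Multiplicative.ofAdd w ^ c) = (c:ℤ) • w := by
        ext t
        simp [toAdd_pow]
      rwa [hsm] at this
    apply Matrix.ext
    intro i' j'
    obtain ⟨c, hc, hz⟩ := hA (Pi.single j' 1)
    rw [Matrix.mulVec_smul] at hz
    rcases smul_eq_zero.mp hz with h | h
    · exfalso; omega
    · have := congrFun h i'
      rw [Matrix.mulVec_single] at this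
      simpa using this
  -- Step B : N * E_{ij} * N = 0 for i ≠ j
  have hX : ∀ i j : Fin n, i ≠ j → N * Matrix.single i j (1:ℤ) * N = 0 := by
    intro i j hij
    obtain ⟨m, hm, _, hmem⟩ := Subgroup.exists_pow_mem_of_index_ne_zero hΛ
      (SemidirectProduct.inr (tv i j hij 1))
    rw [← map_pow, tv_pow] at hmem
    have hmem2 : SemidirectProduct.inr (tv i j hij (2*(m:ℤ))) ∈ Λ := by
      have := Λ.mul_mem hmem hmem
      rwa [← _root_.map_mul, tv_mul, ← two_mul] at this
    have hE : Matrix.single i j (1:ℤ) * Matrix.single i j (1:ℤ) = 0 := by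
      apply Matrix.single_mul_single_of_ne
      exact Ne.symm hij
    have hmateq : ∀ k : ℤ, SemidirectProduct.inr (tv i j hij k) ∈ Λ →
        (1+k•Matrix.single i j (1:ℤ))*(1+N)*(1-k•Matrix.single i j (1:ℤ))*(1+N)
          = (1+N)*((1+k•Matrix.single i j (1:ℤ))*(1+N)*(1-k•Matrix.single i j (1:ℤ))) := by
      intro k hk
      have hcomm := hP _ hk
      have hcomm2 : Commute (tv i j hij k * g.right * (tv i j hij k)⁻¹) g.right := by
        have := hcomm.map (SemidirectProduct.rightHom)
        simpa [SemidirectProduct.rightHom_inr, _root_.map_mul, map_inv] using this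
      have heq := hcomm2.eq
      have heqM := congrArg
        (fun S : SpecialLinearGroup (Fin n) ℤ => (S : Matrix (Fin n) (Fin n) ℤ)) heq
      simp only [tv_inv, Matrix.SpecialLinearGroup.coe_mul, tv_coe, neg_smul] at heqM
      have hBN : (g.right : Matrix (Fin n) (Fin n) ℤ) = 1 + N := by
        rw [hNdef, hB]; abel
      rw [hBN] at heqM
      rw [sub_eq_add_neg]
      convert heqM using 3
    exact stepB N (Matrix.single i j (1:ℤ)) hN2 hE (m:ℤ) (by exact_mod_cast hm.ne')
      (hmateq _ hmem) (hmateq _ hmem2)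
  -- conclude
  have hN0 : N = 0 := comb N hN2 (fun i j hij a b => by
    have := congrFun (congrFun (hX i j hij) a) b
    rwa [entryNEN, Matrix.zero_apply] at this)
  have hright : g.right = 1 := by
    apply Subtype.ext
    have : B = 1 := by rw [← sub_eq_zero]; exact hN0
    exact this
  rw [SemidirectProduct.range_inl_eq_ker_rightHom, MonoidHom.mem_ker,
    SemidirectProduct.rightHom_eq_right]
  exact hright

/-- Translations satisfy the commuting-conjugates property. -/
lemma easy_lemma {n : ℕ} (g x : GammaSL n)
    (hg : g ∈ (SemidirectProduct.inl :
      Multiplicative (Fin n → ℤ) →* GammaSL n).range) :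
    Commute (x * g * x⁻¹) g := by
  obtain ⟨a, rfl⟩ := hg
  have hconj : x * SemidirectProduct.inl a * x⁻¹ ∈ (SemidirectProduct.inl :
      Multiplicative (Fin n → ℤ) →* GammaSL n).range := by
    rw [SemidirectProduct.range_inl_eq_ker_rightHom, MonoidHom.mem_ker] at *
    simp [SemidirectProduct.rightHom_inl]
  obtain ⟨b, hb⟩ := hconj
  rw [← hb]
  show _ * _ = _ * _
  rw [← _root_.map_mul, ← _root_.map_mul, mul_comm]

/-- Transporting the commuting-conjugates property through an isomorphism of subgroups. -/
lemma transport_lemma {n : ℕ} (Λ₁ Λ₂ : Subgroup (GammaSL n)) (δ : ↥Λ₁ ≃* ↥Λ₂) (x : ↥Λ₁)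
    (hx : ∀ y ∈ Λ₁, Commute (y * (x : GammaSL n) * y⁻¹) (x : GammaSL n)) :
    ∀ y ∈ Λ₂, Commute (y * ((δ x : ↥Λ₂) : GammaSL n) * y⁻¹) ((δ x : ↥Λ₂) : GammaSL n) := by
  intro y hy
  set y' : ↥Λ₂ := ⟨y, hy⟩
  have hsub : Commute ((δ.symm y') * x * (δ.symm y')⁻¹) x := by
    have hgam := hx ((δ.symm y' : ↥Λ₁) : GammaSL n) (δ.symm y' : ↥Λ₁).2
    apply Subtype.coe_injective.eq_iff.mp
    push_cast
    exact hgam.eq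
  have h2 := hsub.map δ.toMonoidHom
  simp only [MulEquiv.coe_toMonoidHom, _root_.map_mul, map_inv, MulEquiv.apply_symm_apply] at h2
  have h3 := h2.map Λ₂.subtype
  simpa using h3

end Aux

/-- For `n ≥ 2` and finite-index subgroups `Λ₁, Λ₂` of `Γ = ℤⁿ ⋊ SL(n,ℤ)`, any group
isomorphism `δ : Λ₁ → Λ₂` maps `Λ₁ ∩ ℤⁿ` onto `Λ₂ ∩ ℤⁿ`, where `ℤⁿ` is the translation
normal subgroup (the range of the canonical inclusion). -/
theorem stmt_17 (n : ℕ) (hn : 2 ≤ n) (Λ₁ Λ₂ : Subgroup (GammaSL n))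
    (h₁ : Λ₁.index ≠ 0) (h₂ : Λ₂.index ≠ 0) (δ : ↥Λ₁ ≃* ↥Λ₂) :
    Subgroup.map (Λ₂.subtype.comp δ.toMonoidHom)
        ((SemidirectProduct.inl.range).comap Λ₁.subtype)
      = SemidirectProduct.inl.range ⊓ Λ₂ := by
  ext gz
  simp only [Subgroup.mem_map, Subgroup.mem_comap, MonoidHom.comp_apply, Subgroup.coe_subtype,
    MulEquiv.coe_toMonoidHom, Subgroup.mem_inf]
  constructor
  · rintro ⟨x, hx, rfl⟩
    refine ⟨?_, (δ x).2⟩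
    apply key_lemma Λ₂ h₂
    apply transport_lemma Λ₁ Λ₂ δ x
    intro y hy
    exact easy_lemma _ _ hx
  · rintro ⟨hrange, hmem⟩
    refine ⟨δ.symm ⟨gz, hmem⟩, ?_, by simp⟩
    apply key_lemma Λ₁ h₁
    apply transport_lemma Λ₂ Λ₁ δ.symm ⟨gz, hmem⟩
    intro y hy
    exact easy_lemma _ _ hrange
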